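/- Let n ≥ 1, let f_0, …, f_n be n+1 polynomials in ℚ[x_0, …, x_{n-1}], and let C be their Dixon cancellation matrix over ℚ[x_0,…,x_{n-1}, x̄_0,…,x̄_{n-1}]. Then the product ∏_{k=0}^{n-1} (x_k − x̄_k) divides det C in ℚ[x_0,…,x_{n-1}, x̄_0,…,x̄_{n-1}]. (Hence the Dixon polynomial θ = det C / ∏_{k}(x_k − x̄_k) is a well-defined polynomial.) -/

import Mathlib

set_option maxHeartbeats 1000000

open MvPolynomial

/-- The `i`-th Dixon substitution homomorphism `φ_i : ℚ[x] → ℚ[x, x̄]`,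
sending `x_k ↦ x̄_k` for `k < i` and `x_k ↦ x_k` for `k ≥ i`.
Here `Sum.inl k` is the unbarred variable `x_k` and `Sum.inr k` is the barred `x̄_k`. -/
noncomputable def dixonPhi (n : ℕ) (i : Fin (n + 1)) :
    MvPolynomial (Fin n) ℚ →ₐ[ℚ] MvPolynomial (Fin n ⊕ Fin n) ℚ :=
  aeval (fun k : Fin n => if (k : ℕ) < (i : ℕ) then X (Sum.inr k) else X (Sum.inl k))

/-- The Dixon cancellation matrix of `f_0, …, f_n`, with entries `C i j = φ_i (f j)`. -/
noncomputable def dixonCancellationMatrix (n : ℕ)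
    (f : Fin (n + 1) → MvPolynomial (Fin n) ℚ) :
    Matrix (Fin (n + 1)) (Fin (n + 1)) (MvPolynomial (Fin n ⊕ Fin n) ℚ) :=
  fun i j => dixonPhi n i (f j)

/-- View `ℚ[x,x̄]` as polynomials in the single variable `x̄_k`. -/
noncomputable def dixonEquiv (n : ℕ) (k : Fin n) :
    MvPolynomial (Fin n ⊕ Fin n) ℚ ≃ₐ[ℚ]
      Polynomial (MvPolynomial {v : Fin n ⊕ Fin n // v ≠ Sum.inr k} ℚ) :=
  (renameEquiv ℚ (Equiv.optionSubtypeNe (Sum.inr k)).symm).trans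
    (optionEquivLeft ℚ _)

lemma dixonEquiv_X (n : ℕ) (k : Fin n) (v : Fin n ⊕ Fin n) :
    dixonEquiv n k (X v) = if h : v = Sum.inr k then Polynomial.X
      else Polynomial.C (X ⟨v, h⟩) := by
  by_cases h : v = Sum.inr k
  · subst h
    rw [dif_pos rfl]
    show optionEquivLeft ℚ _ (rename _ (X (Sum.inr k))) = _
    rw [rename_X, Equiv.optionSubtypeNe_symm_self, optionEquivLeft_X_none]
  · rw [dif_neg h]
    show optionEquivLeft ℚ _ (rename _ (X v)) = _
    rw [rename_X, Equiv.optionSubtypeNe_symm_of_ne h, optionEquivLeft_X_some]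

lemma dixon_prime (n : ℕ) (k : Fin n) :
    Prime ((X (Sum.inl k) - X (Sum.inr k) : MvPolynomial (Fin n ⊕ Fin n) ℚ)) := by
  have hne : (Sum.inl k : Fin n ⊕ Fin n) ≠ Sum.inr k := by simp
  have h1 : dixonEquiv n k ((X (Sum.inl k) - X (Sum.inr k) :
      MvPolynomial (Fin n ⊕ Fin n) ℚ)) =
      -(Polynomial.X - Polynomial.C (X ⟨Sum.inl k, hne⟩)) := by
    rw [map_sub, dixonEquiv_X, dixonEquiv_X, dif_neg hne, dif_pos rfl, neg_sub]
  have hp : Prime (dixonEquiv n k ((X (Sum.inl k) - X (Sum.inr k) :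
      MvPolynomial (Fin n ⊕ Fin n) ℚ))) := by
    rw [h1]
    apply Prime.neg
    apply Polynomial.prime_X_sub_C
  exact (MulEquiv.prime_iff (dixonEquiv n k).toMulEquiv).mp hp

/-- The substitution `x̄_k ↦ x_k` landing in the variable set without `x̄_k`. -/
noncomputable def dixonPsi (n : ℕ) (k : Fin n) :
    MvPolynomial (Fin n ⊕ Fin n) ℚ →ₐ[ℚ]
      MvPolynomial {v : Fin n ⊕ Fin n // v ≠ Sum.inr k} ℚ :=
  ((Polynomial.aeval (R := MvPolynomial {v : Fin n ⊕ Fin n // v ≠ Sum.inr k} ℚ)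
      (X ⟨Sum.inl k, by simp⟩)).restrictScalars ℚ).comp (dixonEquiv n k).toAlgHom

lemma dixonPsi_X (n : ℕ) (k : Fin n) (v : Fin n ⊕ Fin n) :
    dixonPsi n k (X v) = if h : v = Sum.inr k then X ⟨Sum.inl k, by simp⟩
      else X ⟨v, h⟩ := by
  show (Polynomial.aeval _) (dixonEquiv n k (X v)) = _
  rw [dixonEquiv_X]
  by_cases h : v = Sum.inr k
  · simp [h]
  · simp [h]

/-- A finite product of pairwise non-associated primes dividing `m` divides `m`. -/
lemma prod_primes_dvd_of_forall_dvd {α : Type*} [CommMonoidWithZero α] [IsCancelMulZero α]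
    {ι : Type*} [DecidableEq ι] (s : Finset ι) (p : ι → α) (m : α)
    (hp : ∀ i ∈ s, Prime (p i)) (hd : ∀ i ∈ s, p i ∣ m)
    (ha : ∀ i ∈ s, ∀ j ∈ s, Associated (p i) (p j) → i = j) :
    (∏ i ∈ s, p i) ∣ m := by
  induction s using Finset.induction_on generalizing m with
  | empty => simp
  | @insert a s hane ih =>
    rw [Finset.prod_insert hane]
    obtain ⟨c, rfl⟩ := hd a (Finset.mem_insert_self a s)
    have hp' : ∀ i ∈ s, Prime (p i) := fun i hi => hp i (Finset.mem_insert_of_mem hi)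
    have ha' : ∀ i ∈ s, ∀ j ∈ s, Associated (p i) (p j) → i = j := fun i hi j hj hij =>
      ha i (Finset.mem_insert_of_mem hi) j (Finset.mem_insert_of_mem hj) hij
    have hd' : ∀ i ∈ s, p i ∣ c := by
      intro i hi
      have hia : i ≠ a := by rintro rfl; exact hane hi
      have hdi := hd i (Finset.mem_insert_of_mem hi)
      rcases (hp' i hi).dvd_or_dvd hdi with h | h
      · exact absurd (ha i (Finset.mem_insert_of_mem hi) a (Finset.mem_insert_self a s)
          ((hp' i hi).associated_of_dvd (hp a (Finset.mem_insert_self a s)) h)) hia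
      · exact h
    exact mul_dvd_mul_left _ (ih c hp' hd' ha')

lemma dixon_factor_dvd (n : ℕ) (k : Fin n)
    (f : Fin (n + 1) → MvPolynomial (Fin n) ℚ) :
    (X (Sum.inl k) - X (Sum.inr k) : MvPolynomial (Fin n ⊕ Fin n) ℚ) ∣
      (dixonCancellationMatrix n f).det := by
  have hne : (Sum.inl k : Fin n ⊕ Fin n) ≠ Sum.inr k := by simp
  -- the substituted matrix has two equal rows
  have hrow : ∀ j, dixonPsi n k (dixonCancellationMatrix n f k.castSucc j)
      = dixonPsi n k (dixonCancellationMatrix n f k.succ j) := by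
    intro j
    show ((dixonPsi n k).comp (dixonPhi n k.castSucc)) (f j)
      = ((dixonPsi n k).comp (dixonPhi n k.succ)) (f j)
    unfold dixonPhi
    rw [comp_aeval, comp_aeval]
    have hfun : (fun t : Fin n => dixonPsi n k
          (if (t : ℕ) < (k.castSucc : ℕ) then X (Sum.inr t) else X (Sum.inl t)))
        = fun t : Fin n => dixonPsi n k
          (if (t : ℕ) < (k.succ : ℕ) then X (Sum.inr t) else X (Sum.inl t)) := by
      funext t
      rcases lt_trichotomy (t : ℕ) (k : ℕ) with h | h | h
      · have h1 : (t : ℕ) < (k.castSucc : ℕ) := by simpa using h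
        have h2 : (t : ℕ) < (k.succ : ℕ) := by simp; omega
        rw [if_pos h1, if_pos h2]
      · have h1 : ¬ (t : ℕ) < (k.castSucc : ℕ) := by simp; omega
        have h2 : (t : ℕ) < (k.succ : ℕ) := by simp; omega
        have htk : t = k := Fin.ext h
        subst htk
        rw [if_neg h1, if_pos h2, dixonPsi_X, dixonPsi_X, dif_pos rfl,
          dif_neg (by simp)]
      · have h1 : ¬ (t : ℕ) < (k.castSucc : ℕ) := by simp; omega
        have h2 : ¬ (t : ℕ) < (k.succ : ℕ) := by simp; omega
        rw [if_neg h1, if_neg h2]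
    rw [hfun]
  have hdet0 : dixonPsi n k ((dixonCancellationMatrix n f).det) = 0 := by
    have hmap := RingHom.map_det (dixonPsi n k).toRingHom (dixonCancellationMatrix n f)
    have hz : ((dixonCancellationMatrix n f).map
        ⇑(dixonPsi n k).toRingHom).det = 0 :=
      Matrix.det_zero_of_row_eq (Fin.castSucc_lt_succ (i := k)).ne (funext hrow)
    exact hmap.trans hz
  -- translate to the one-variable polynomial picture
  have hroot : Polynomial.IsRoot (dixonEquiv n k ((dixonCancellationMatrix n f).det))
      (X (⟨Sum.inl k, hne⟩ : {v : Fin n ⊕ Fin n // v ≠ Sum.inr k})) := by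
    have h0 : (Polynomial.aeval (R := MvPolynomial {v : Fin n ⊕ Fin n // v ≠ Sum.inr k} ℚ)
        (X (⟨Sum.inl k, hne⟩ : {v : Fin n ⊕ Fin n // v ≠ Sum.inr k})))
        (dixonEquiv n k ((dixonCancellationMatrix n f).det)) = 0 := hdet0
    rwa [Polynomial.aeval_def, Polynomial.eval₂_eq_eval_map,
      Algebra.algebraMap_self, Polynomial.map_id] at h0
  have hdvd : dixonEquiv n k ((X (Sum.inl k) - X (Sum.inr k) :
      MvPolynomial (Fin n ⊕ Fin n) ℚ)) ∣
      dixonEquiv n k ((dixonCancellationMatrix n f).det) := by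
    have h1 : dixonEquiv n k ((X (Sum.inl k) - X (Sum.inr k) :
        MvPolynomial (Fin n ⊕ Fin n) ℚ)) =
        -(Polynomial.X - Polynomial.C (X ⟨Sum.inl k, hne⟩)) := by
      rw [map_sub, dixonEquiv_X, dixonEquiv_X, dif_neg hne, dif_pos rfl, neg_sub]
    rw [h1]
    exact neg_dvd.mpr (Polynomial.dvd_iff_isRoot.mpr hroot)
  have := map_dvd (dixonEquiv n k).symm hdvd
  simpa using this

/-- The product `∏ (x_k − x̄_k)` divides the determinant of the Dixon
cancellation matrix, so the Dixon polynomial is well defined. -/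
theorem dixon_prod_dvd_det (n : ℕ) (hn : 1 ≤ n)
    (f : Fin (n + 1) → MvPolynomial (Fin n) ℚ) :
    (∏ k : Fin n, (X (Sum.inl k) - X (Sum.inr k)) :
        MvPolynomial (Fin n ⊕ Fin n) ℚ) ∣
      (dixonCancellationMatrix n f).det := by
  refine prod_primes_dvd_of_forall_dvd Finset.univ
    (fun k : Fin n => (X (Sum.inl k) - X (Sum.inr k) : MvPolynomial (Fin n ⊕ Fin n) ℚ))
    _ (fun k _ => dixon_prime n k) (fun k _ => dixon_factor_dvd n k f) ?_
  intro i _ j _ hij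
  by_contra hne
  have hdvd : (X (Sum.inl i) - X (Sum.inr i) : MvPolynomial (Fin n ⊕ Fin n) ℚ) ∣
      (X (Sum.inl j) - X (Sum.inr j)) := hij.dvd
  set g : Fin n ⊕ Fin n → ℚ := fun v => if v = Sum.inl j then (1 : ℚ) else 0 with hg
  have hmap := map_dvd (eval g) hdvd
  have h0 : eval g (X (Sum.inl i) - X (Sum.inr i) :
      MvPolynomial (Fin n ⊕ Fin n) ℚ) = 0 := by
    simp [hg, hne]
  have h1 : eval g (X (Sum.inl j) - X (Sum.inr j) :
      MvPolynomial (Fin n ⊕ Fin n) ℚ) = 1 := by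
    simp [hg]
  rw [h0, h1, zero_dvd_iff] at hmap
  exact one_ne_zero hmap
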